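/- Let S and S̃ be finite sets and π : S → S̃ a map. For ℓ : S → ℕ define π_*ℓ : S̃ → ℕ by π_*ℓ(x) = Σ_{y ∈ S, π(y)=x} ℓ(y). Then for any ℓ̃ : S̃ → ℕ and k : S → ℕ, the generalized Chu–Vandermonde identity holds: ∏_{x̃ ∈ S̃} C(π_*k(x̃), ℓ̃(x̃)) = Σ_{ℓ : S → ℕ, π_*ℓ = ℓ̃} ∏_{x ∈ S} C(k(x), ℓ(x)), where C(a,b) denotes the binomial coefficient with the convention C(a,b)=0 if a<b. -/

import Mathlib

/-- The pushforward of `ℓ : S → ℕ` along `π : S → S'`: fiberwise sum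
(`0` on points not in the image of `π`). -/
def pushforward {S S' : Type} [Fintype S] [DecidableEq S'] (π : S → S')
    (ℓ : S → ℕ) : S' → ℕ :=
  fun x => ∑ y : S, if π y = x then ℓ y else 0

open Finset MvPowerSeries in
lemma coeff_one_add_X_pow_aux {σ : Type} [DecidableEq σ] (s : σ) (n : ℕ) (e : σ →₀ ℕ) :
    MvPowerSeries.coeff (R := ℕ) e ((1 + MvPowerSeries.X s) ^ n) =
      if e = Finsupp.single s (e s) then n.choose (e s) else 0 := by
  rw [add_comm, add_pow]
  simp only [one_pow, mul_one, map_sum, ← map_natCast (MvPowerSeries.C (σ := σ) (R := ℕ)),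
    MvPowerSeries.coeff_mul_C, MvPowerSeries.coeff_X_pow, ite_mul, one_mul, zero_mul, Nat.cast_id]
  by_cases h : e = Finsupp.single s (e s)
  · rw [if_pos h]
    have key : ∀ i : ℕ, (e = Finsupp.single s i) ↔ i = e s := by
      intro i
      constructor
      · intro hi
        rw [hi, Finsupp.single_eq_same]
      · rintro rfl; exact h
    simp only [key]
    rw [Finset.sum_ite_eq' (Finset.range (n + 1))]
    by_cases hle : e s ∈ Finset.range (n + 1)
    · rw [if_pos hle]
    · rw [if_neg hle]
      rw [Finset.mem_range] at hle
      rw [Nat.choose_eq_zero_of_lt (by omega)]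
  · rw [if_neg h]
    apply Finset.sum_eq_zero
    intro i _
    rw [if_neg]
    intro hi
    have hes : e s = i := by rw [hi, Finsupp.single_eq_same]
    exact h (by rw [hes, ← hi])

open Finset MvPowerSeries in
lemma coeff_prod_one_add_X_pow {T S' : Type} [Fintype T] [DecidableEq T] [Fintype S']
    [DecidableEq S'] (ρ : T → S') (m : T → ℕ) (d : S' →₀ ℕ) :
    MvPowerSeries.coeff (R := ℕ) d (∏ t : T, (1 + MvPowerSeries.X (ρ t)) ^ m t) =
      ∑ ℓ ∈ (Fintype.piFinset fun t => Finset.range (d (ρ t) + 1)).filter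
          (fun ℓ : T → ℕ => pushforward ρ ℓ = fun x' => d x'),
        ∏ t : T, (m t).choose (ℓ t) := by
  classical
  rw [MvPowerSeries.coeff_prod]
  simp only [coeff_one_add_X_pow_aux]
  rw [Finset.sum_congr rfl (fun l _ => Fintype.prod_ite_zero
    (p := fun t => l t = Finsupp.single (ρ t) (l t (ρ t)))
    (f := fun t => (m t).choose (l t (ρ t))))]
  rw [← Finset.sum_filter]
  refine Finset.sum_nbij' (fun l => fun t => l t (ρ t))
    (fun ℓ => Finsupp.equivFunOnFinite.symm fun t => Finsupp.single (ρ t) (ℓ t))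
    ?_ ?_ ?_ ?_ ?_
  · intro l hl
    rw [Finset.mem_filter, Finset.mem_finsuppAntidiag] at hl
    obtain ⟨⟨hsum, -⟩, hsingle⟩ := hl
    have happ : ∀ x', (∑ t : T, (l t) x') = d x' := by
      intro x'
      rw [← hsum]
      simp [Finsupp.coe_finset_sum, Finset.sum_apply]
    rw [Finset.mem_filter, Fintype.mem_piFinset]
    constructor
    · intro t
      rw [Finset.mem_range, Nat.lt_succ_iff, ← happ (ρ t)]
      refine Finset.single_le_sum (f := fun t' => (l t') (ρ t)) (fun _ _ => Nat.zero_le _)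
        (Finset.mem_univ t)
    · funext x'
      rw [pushforward, ← happ x']
      refine Finset.sum_congr rfl fun t _ => ?_
      conv_rhs => rw [hsingle t]
      rw [Finsupp.single_apply]
  · intro ℓ hℓ
    rw [Finset.mem_filter, Fintype.mem_piFinset] at hℓ
    obtain ⟨-, hpush⟩ := hℓ
    rw [Finset.mem_filter, Finset.mem_finsuppAntidiag]
    refine ⟨⟨?_, fun t _ => Finset.mem_univ t⟩, ?_⟩
    · ext x'
      have := congrFun hpush x'
      rw [pushforward] at this
      simp only [Finsupp.coe_equivFunOnFinite_symm, Finsupp.coe_finset_sum,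
        Finset.sum_apply, Finsupp.single_apply]
      rw [← this]
    · intro t
      simp [Finsupp.single_eq_same]
  · intro l hl
    rw [Finset.mem_filter] at hl
    ext t x'
    simp only [Finsupp.coe_equivFunOnFinite_symm]
    conv_rhs => rw [hl.2 t]
  · intro ℓ _
    funext t
    simp [Finsupp.single_eq_same]
  · intro l _
    rfl

open Finset MvPowerSeries in
lemma chu_vandermonde_key {S S' : Type} [Fintype S] [DecidableEq S] [Fintype S']
    [DecidableEq S'] (π : S → S') (k : S → ℕ) (ℓt : S' → ℕ) :
    (∏ x : S', Nat.choose (pushforward π k x) (ℓt x)) =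
      ∑ ℓ ∈ (Fintype.piFinset fun x => Finset.range (ℓt (π x) + 1)).filter
          (fun ℓ : S → ℕ => pushforward π ℓ = ℓt),
        ∏ x : S, (k x).choose (ℓ x) := by
  classical
  set d : S' →₀ ℕ := Finsupp.equivFunOnFinite.symm ℓt with hd
  have hdcoe : ⇑d = ℓt := rfl
  have h1 := coeff_prod_one_add_X_pow π k d
  have h2 := coeff_prod_one_add_X_pow (id : S' → S') (pushforward π k) d
  have hpushid : ∀ ℓ : S' → ℕ, pushforward (id : S' → S') ℓ = ℓ := by
    intro ℓ
    funext x'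
    rw [pushforward]
    simp
  have hprod : (∏ t : S', (1 + MvPowerSeries.X (σ := S') (R := ℕ) (id t)) ^ pushforward π k t)
      = ∏ t : S, (1 + MvPowerSeries.X (π t)) ^ k t := by
    rw [← Fintype.prod_fiberwise π (fun t => (1 + MvPowerSeries.X (R := ℕ) (π t)) ^ k t)]
    refine Fintype.prod_congr _ _ fun j => ?_
    rw [Fintype.prod_congr _ _ (fun i : {i // π i = j} =>
        by rw [i.2] : ∀ i : {i // π i = j},
          (1 + MvPowerSeries.X (R := ℕ) (π (i : S))) ^ k (i : S)
            = (1 + MvPowerSeries.X (R := ℕ) j) ^ k (i : S)),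
      Finset.prod_pow_eq_pow_sum]
    congr 1
    rw [pushforward]
    rw [← Finset.sum_filter (p := fun y => π y = j) (f := k) (s := Finset.univ)]
    exact Finset.sum_subtype _ (by simp) k
  have hsingleton : (Fintype.piFinset fun x' : S' => Finset.range (d (id x') + 1)).filter
      (fun ℓ : S' → ℕ => pushforward (id : S' → S') ℓ = fun x' => d x') = {ℓt} := by
    ext ℓ
    rw [Finset.mem_filter, Fintype.mem_piFinset, Finset.mem_singleton, hpushid]
    constructor
    · intro h
      exact h.2
    · rintro rfl
      refine ⟨fun x' => ?_, rfl⟩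
      exact Finset.mem_range.mpr (Nat.lt_succ_of_le (le_of_eq rfl))
  rw [hsingleton, Finset.sum_singleton] at h2
  rw [hprod, h1, hdcoe] at h2
  exact h2.symm

/-- **Generalized Chu–Vandermonde identity.**  For finite sets `S`, `S'`, a map
`π : S → S'`, and `k : S → ℕ`, `ℓ̃ : S' → ℕ`:
`∏_{x̃} C(π_*k(x̃), ℓ̃(x̃)) = Σ_{ℓ : π_*ℓ = ℓ̃} ∏_{x} C(k(x), ℓ(x))`,
with the convention `C(a,b) = 0` for `a < b` (as for `Nat.choose`). -/
theorem chu_vandermonde_pushforward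
    {S S' : Type} [Fintype S] [Fintype S'] [DecidableEq S'] (π : S → S')
    (k : S → ℕ) (ℓt : S' → ℕ) :
    (∏ x : S', Nat.choose (pushforward π k x) (ℓt x)) =
      ∑ᶠ ℓ ∈ {ℓ : S → ℕ | pushforward π ℓ = ℓt},
        ∏ x : S, Nat.choose (k x) (ℓ x) := by
  letI : DecidableEq S := Classical.decEq S
  have hset : {ℓ : S → ℕ | pushforward π ℓ = ℓt} =
      ↑((Fintype.piFinset fun x => Finset.range (ℓt (π x) + 1)).filter
          (fun ℓ : S → ℕ => pushforward π ℓ = ℓt)) := by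
    ext ℓ
    simp only [Set.mem_setOf_eq, Finset.coe_filter, Set.mem_setOf_eq, Fintype.mem_piFinset,
      Finset.mem_range]
    constructor
    · intro h
      refine ⟨fun x => ?_, h⟩
      have h1 : ℓ x ≤ pushforward π ℓ (π x) := by
        rw [pushforward]
        calc ℓ x = (if π x = π x then ℓ x else 0) := by rw [if_pos rfl]
          _ ≤ _ := Finset.single_le_sum (f := fun y => if π y = π x then ℓ y else 0)
            (fun _ _ => Nat.zero_le _) (Finset.mem_univ x)
      rw [h] at h1
      omega
    · rintro ⟨-, h⟩; exact h
  rw [hset, finsum_mem_coe_finset]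
  exact chu_vandermonde_key π k ℓt
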